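/- (Multinomial Simons identity) Let m be a positive integer, n ∈ ℕ^m, and x ∈ ℂ^m. Then the sum, over all k ∈ ℕ^m with k_i ≤ n_i for each i, of (−1)^{|n|−|k|}·C(|n|, n−k)·C(|n|+|k|, k)·(1+x)^k, equals the sum over the same range of k of C(|n|, n−k)·C(|n|+|k|, k)·x^k, where |k| = k_1 + ⋯ + k_m, x^k = x_1^{k_1}⋯x_m^{k_m}, and (1+x)^k = (1+x_1)^{k_1}⋯(1+x_m)^{k_m}. -/

import Mathlib

/-- The multinomial coefficient `C(x, n) = x(x-1)⋯(x-|n|+1)/(n₁!⋯n_m!)` for `x : ℂ`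
and `n ∈ ℕ^m`, where `|n| = n₁ + ⋯ + n_m`. -/
noncomputable def multiBinom {m : ℕ} (x : ℂ) (n : Fin m → ℕ) : ℂ :=
  (∏ i ∈ Finset.range (∑ j, n j), (x - i)) / ((∏ j, Nat.factorial (n j) : ℕ) : ℂ)

open Finset Polynomial

lemma Iic_eq_range (t : ℕ) : Finset.Iic t = Finset.range (t+1) := by
  ext i; simp [Nat.lt_succ_iff]

lemma h1 (t : ℕ) :
    ∑ i ∈ Finset.Iic t, Polynomial.C ((-1:ℂ)^(t-i) * (t.choose i : ℂ)) * (X+1)^i = X^t := by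
  have h := add_pow (X + 1 : Polynomial ℂ) (-1) t
  have hx : (X + 1 + -1 : Polynomial ℂ) = X := by ring
  rw [hx] at h
  rw [Iic_eq_range, h]
  refine Finset.sum_congr rfl fun i _ => ?_
  simp only [map_mul, map_pow, map_neg, map_one, map_natCast]
  ring

lemma Iic_pi_eq {m : ℕ} (M : Fin m → ℕ) :
    Finset.Iic M = Fintype.piFinset fun j => Finset.Iic (M j) := by
  ext b; simp [Fintype.mem_piFinset, Pi.le_def]

lemma hcore {m : ℕ} (M : Fin m → ℕ) :
    ∑ b ∈ Finset.Iic M, Polynomial.C ((-1:ℂ)^((∑ j, M j) - ∑ j, b j)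
        * ∏ j, ((M j).choose (b j) : ℂ)) * (X+1)^(∑ j, b j)
      = X ^ (∑ j, M j) := by
  have h := Finset.prod_univ_sum (fun j => Finset.Iic (M j))
      (fun j i => Polynomial.C ((-1:ℂ)^(M j - i) * ((M j).choose i : ℂ)) * (X+1)^i)
  have step : ∑ b ∈ Finset.Iic M, Polynomial.C ((-1:ℂ)^((∑ j, M j) - ∑ j, b j)
        * ∏ j, ((M j).choose (b j) : ℂ)) * (X+1)^(∑ j, b j)
      = ∑ b ∈ Fintype.piFinset fun j => Finset.Iic (M j),
        ∏ j, (Polynomial.C ((-1:ℂ)^(M j - b j) * ((M j).choose (b j) : ℂ)) * (X+1)^(b j)) := by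
    rw [Iic_pi_eq]
    refine Finset.sum_congr rfl fun b hb => ?_
    have hbM : ∀ j, b j ≤ M j := by
      intro j; exact Finset.mem_Iic.mp (Fintype.mem_piFinset.mp hb j)
    rw [Finset.prod_mul_distrib, Finset.prod_pow_eq_pow_sum, ← map_prod]
    congr 2
    rw [Finset.prod_mul_distrib, Finset.prod_pow_eq_pow_sum,
      ← Finset.sum_tsub_distrib Finset.univ fun j _ => hbM j]
  rw [step, ← h, Finset.prod_congr rfl fun j _ => h1 (M j), Finset.prod_pow_eq_pow_sum]

lemma key_sum {m : ℕ} (M : Fin m → ℕ) (c N : ℕ) (hMN : ∑ j, M j ≤ N) :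
    ∑ b ∈ Finset.Iic M, ((-1 : ℂ) ^ ((∑ j, M j) - ∑ j, b j) *
      (∏ j, ((M j).choose (b j) : ℂ)) * ((c + ∑ j, b j).choose N : ℂ))
      = (c.choose (N - ∑ j, M j) : ℂ) := by
  have hr : (X ^ (∑ j, M j) * (X+1)^c : Polynomial ℂ).coeff N
      = (c.choose (N - ∑ j, M j) : ℂ) := by
    rw [show N = (N - ∑ j, M j) + ∑ j, M j from (Nat.sub_add_cancel hMN).symm,
      Polynomial.coeff_X_pow_mul, Polynomial.coeff_X_add_one_pow, Nat.add_sub_cancel]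
  have hp := congrArg (fun p : Polynomial ℂ => p.coeff N)
    (congrArg (· * (X+1)^c) (hcore M))
  simp only [Finset.sum_mul, mul_assoc, ← pow_add] at hp
  rw [Polynomial.finset_sum_coeff] at hp
  simp only [Polynomial.coeff_C_mul, Polynomial.coeff_X_add_one_pow] at hp
  rw [hr] at hp
  rw [← hp]
  refine Finset.sum_congr rfl fun b hb => ?_
  rw [add_comm c (∑ j, b j), mul_assoc]

lemma multiBinom_natCast {m : ℕ} (x : ℕ) (v : Fin m → ℕ) :
    multiBinom (x:ℂ) v
      = ((x.descFactorial (∑ j, v j) : ℕ) : ℂ) / ((∏ j, Nat.factorial (v j) : ℕ) : ℂ) := by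
  unfold multiBinom
  rw [Finset.prod_range_natCast_sub, ← Nat.descFactorial_eq_prod_range]

lemma cast_descFactorial {x d : ℕ} (h : d ≤ x) :
    ((x.descFactorial d : ℕ) : ℂ) = (x.factorial : ℂ) / ((x - d).factorial : ℂ) := by
  rw [eq_div_iff (Nat.cast_ne_zero.mpr (Nat.factorial_ne_zero _) : (((x-d).factorial : ℕ) : ℂ) ≠ 0)]
  exact_mod_cast congrArg (Nat.cast : ℕ → ℂ)
    ((mul_comm _ _).trans (Nat.factorial_mul_descFactorial h))

lemma BB_eq {m : ℕ} (n k : Fin m → ℕ) (hk : k ≤ n) :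
    multiBinom ((∑ j, n j : ℕ) : ℂ) (n - k) * multiBinom (((∑ j, n j) + ∑ j, k j : ℕ) : ℂ) k
      = ((((∑ j, n j) + ∑ j, k j).factorial : ℕ) : ℂ) /
        (((∑ j, k j).factorial : ℂ) * (∏ j, ((n j - k j).factorial : ℂ))
          * ∏ j, ((k j).factorial : ℂ)) := by
  set N := ∑ j, n j with hN
  set K := ∑ j, k j with hK
  have hKN : K ≤ N := Finset.sum_le_sum fun j _ => hk j
  have hsub : ∑ j, (n - k) j = N - K := by
    simp only [Pi.sub_apply]
    rw [Finset.sum_tsub_distrib Finset.univ fun j _ => hk j]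
  rw [multiBinom_natCast, multiBinom_natCast, hsub]
  rw [cast_descFactorial (Nat.sub_le _ _), cast_descFactorial (Nat.le_add_left _ _)]
  rw [Nat.sub_sub_self hKN, Nat.add_sub_cancel]
  have h1 : ((N.factorial : ℕ) : ℂ) ≠ 0 := Nat.cast_ne_zero.mpr (Nat.factorial_ne_zero _)
  have h2 : ((K.factorial : ℕ) : ℂ) ≠ 0 := Nat.cast_ne_zero.mpr (Nat.factorial_ne_zero _)
  have h3 : (∏ j, (((n j - k j).factorial : ℕ) : ℂ)) ≠ 0 :=
    Finset.prod_ne_zero_iff.mpr fun j _ => Nat.cast_ne_zero.mpr (Nat.factorial_ne_zero _)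
  have h4 : (∏ j, (((k j).factorial : ℕ) : ℂ)) ≠ 0 :=
    Finset.prod_ne_zero_iff.mpr fun j _ => Nat.cast_ne_zero.mpr (Nat.factorial_ne_zero _)
  push_cast
  push_cast at h3 h4
  simp only [Pi.sub_apply]
  field_simp

lemma fact_prod_ne {m : ℕ} (v : Fin m → ℕ) : (∏ j, ((v j).factorial : ℂ)) ≠ 0 :=
  Finset.prod_ne_zero_iff.mpr fun j _ => Nat.cast_ne_zero.mpr (Nat.factorial_ne_zero _)

lemma term_eq {m : ℕ} (n a b : Fin m → ℕ) (ha : a ≤ n) (hb : b ≤ n - a) :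
    (-1:ℂ) ^ ((∑ j, n j) - ∑ j, (a + b) j)
      * (multiBinom ((∑ j, n j : ℕ) : ℂ) (n - (a+b))
         * multiBinom (((∑ j, n j) + ∑ j, (a+b) j : ℕ) : ℂ) (a+b))
      * ∏ j, (((a+b) j).choose (a j) : ℂ)
    = ((∑ j, n j).factorial : ℂ)
        / ((∏ j, ((n j - a j).factorial : ℂ)) * ∏ j, ((a j).factorial : ℂ))
      * ((-1:ℂ) ^ ((∑ j, (n j - a j)) - ∑ j, b j)
        * (∏ j, ((n j - a j).choose (b j) : ℂ))
        * ((((∑ j, n j) + ∑ j, a j + ∑ j, b j).choose (∑ j, n j) : ℂ))) := by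
  have hb' : ∀ j, b j ≤ n j - a j := by
    intro j; have h1 := hb j; simpa [Pi.sub_apply] using h1
  have hab : a + b ≤ n := by
    intro j
    have h1 := hb' j
    have h2 : a j ≤ n j := ha j
    simp only [Pi.add_apply]
    omega
  set N := ∑ j, n j with hN
  set A := ∑ j, a j with hA
  set B := ∑ j, b j with hB
  have hsumab : ∑ j, (a + b) j = A + B := by
    simp only [Pi.add_apply]; rw [Finset.sum_add_distrib]
  have hMs : ∑ j, (n j - a j) = N - A :=
    Finset.sum_tsub_distrib Finset.univ fun j _ => ha j
  have hAN : A ≤ N := Finset.sum_le_sum fun j _ => ha j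
  have hBM : B ≤ N - A := hMs ▸ Finset.sum_le_sum fun j _ => hb' j
  rw [BB_eq n (a+b) hab, hsumab]
  have hsign : (∑ j, (n j - a j)) - B = N - (A + B) := by rw [hMs]; omega
  rw [hsign]
  have hch1 : ∀ j, (((a+b) j).choose (a j) : ℂ)
      = (((a j + b j).factorial : ℂ)) / (((a j).factorial : ℂ) * ((b j).factorial : ℂ)) := by
    intro j
    simp only [Pi.add_apply]
    exact Nat.cast_add_choose ℂ
  have hch2 : ∀ j, ((n j - a j).choose (b j) : ℂ)
      = (((n j - a j).factorial : ℂ))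
        / (((b j).factorial : ℂ) * (((n j - a j) - b j).factorial : ℂ)) := by
    intro j
    rw [Nat.cast_choose ℂ (hb' j)]
  have hABsub : N + A + B - N = A + B := by omega
  have hch3 : ((N + A + B).choose N : ℂ)
      = ((N + A + B).factorial : ℂ) / ((N.factorial : ℂ) * ((A + B).factorial : ℂ)) := by
    rw [Nat.cast_choose ℂ (by omega : N ≤ N + A + B), hABsub]
  have hnab : ∀ j, n j - (a + b) j = (n j - a j) - b j := by
    intro j; simp only [Pi.add_apply]; omega
  simp only [hch1, hch2, hch3, hnab]
  rw [Finset.prod_div_distrib, Finset.prod_div_distrib, Finset.prod_mul_distrib,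
    Finset.prod_mul_distrib]
  have e1 : (∏ j, (((a+b) j).factorial : ℂ)) ≠ 0 := fact_prod_ne _
  have e2 := fact_prod_ne (fun j => n j - a j)
  have e3 := fact_prod_ne a
  have e4 := fact_prod_ne b
  have e5 := fact_prod_ne (fun j => (n j - a j) - b j)
  have e6 : ((N.factorial : ℕ) : ℂ) ≠ 0 := Nat.cast_ne_zero.mpr (Nat.factorial_ne_zero _)
  have e7 : (((A+B).factorial : ℕ) : ℂ) ≠ 0 := Nat.cast_ne_zero.mpr (Nat.factorial_ne_zero _)
  simp only [Pi.add_apply] at e1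
  simp only [Pi.add_apply, ← hN]
  field_simp
  ring

lemma E_a {m : ℕ} (n a : Fin m → ℕ) (ha : a ∈ Finset.Iic n) :
    ∑ k ∈ Finset.Iic n, ((-1:ℂ) ^ ((∑ j, n j) - ∑ j, k j)
        * (multiBinom ((∑ j, n j : ℕ) : ℂ) (n - k)
           * multiBinom (((∑ j, n j) + ∑ j, k j : ℕ) : ℂ) k)
        * ∏ j, ((k j).choose (a j) : ℂ))
      = multiBinom ((∑ j, n j : ℕ) : ℂ) (n - a)
        * multiBinom (((∑ j, n j) + ∑ j, a j : ℕ) : ℂ) a := by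
  have han : a ≤ n := Finset.mem_Iic.mp ha
  set N := ∑ j, n j with hN
  set A := ∑ j, a j with hA
  have hAN : A ≤ N := Finset.sum_le_sum fun j _ => han j
  have hMs : ∑ j, (n j - a j) = N - A :=
    Finset.sum_tsub_distrib Finset.univ fun j _ => han j
  -- restrict to Icc a n
  rw [← Finset.sum_subset (Finset.Icc_subset_Iic_self (a := a) (b := n)) ?vanish]
  case vanish =>
    intro k hk hk'
    have hnk : ¬ a ≤ k := by
      rw [Finset.mem_Icc] at hk'
      rw [Finset.mem_Iic] at hk
      tauto
    obtain ⟨j, hj⟩ : ∃ j, k j < a j := by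
      by_contra h
      push_neg at h
      exact hnk fun j => h j
    rw [Finset.prod_eq_zero (Finset.mem_univ j)
      (by rw [Nat.choose_eq_zero_of_lt hj]; simp), mul_zero]
  -- reindex k = a + b
  rw [Finset.sum_nbij' (i := fun k => k - a) (j := fun b => a + b)
    (t := Finset.Iic (n - a))
    (g := fun b => (-1:ℂ) ^ ((∑ j, n j) - ∑ j, (a + b) j)
      * (multiBinom ((∑ j, n j : ℕ) : ℂ) (n - (a + b))
         * multiBinom (((∑ j, n j) + ∑ j, (a + b) j : ℕ) : ℂ) (a + b))
      * ∏ j, (((a + b) j).choose (a j) : ℂ))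
    ?hi ?hj ?li ?ri ?he]
  case hi =>
    intro k hk
    rw [Finset.mem_Icc] at hk
    rw [Finset.mem_Iic]
    intro j
    have h1 : a j ≤ k j := hk.1 j
    have h2 : k j ≤ n j := hk.2 j
    simp only [Pi.sub_apply]
    omega
  case hj =>
    intro b hb
    rw [Finset.mem_Iic] at hb
    rw [Finset.mem_Icc]
    constructor
    · intro j; simp only [Pi.add_apply]; omega
    · intro j
      have h1 : b j ≤ n j - a j := hb j
      have h2 : a j ≤ n j := han j
      simp only [Pi.add_apply]
      omega
  case li =>
    intro k hk
    rw [Finset.mem_Icc] at hk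
    funext j
    have h1 : a j ≤ k j := hk.1 j
    simp only [Pi.add_apply, Pi.sub_apply]
    omega
  case ri =>
    intro b hb
    rw [Finset.mem_Iic] at hb
    funext j
    have h1 : b j ≤ n j - a j := hb j
    simp only [Pi.add_apply, Pi.sub_apply]
    omega
  case he =>
    intro k hk
    rw [Finset.mem_Icc] at hk
    have h1 : a + (k - a) = k := by
      funext j
      have h2 : a j ≤ k j := hk.1 j
      simp only [Pi.add_apply, Pi.sub_apply]
      omega
    rw [h1]
  -- now pointwise rewrite and apply key_sum
  rw [Finset.sum_congr rfl fun b hb => term_eq n a b han (Finset.mem_Iic.mp hb)]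
  rw [← Finset.mul_sum]
  rw [show Finset.Iic (n - a) = Finset.Iic (fun j => n j - a j) from rfl]
  rw [key_sum (fun j => n j - a j) (N + A) N (by rw [hMs]; omega)]
  rw [hMs, BB_eq n a han]
  have hsub : N - (N - A) = A := by omega
  rw [hsub, Nat.cast_choose ℂ (by omega : A ≤ N + A), (by omega : N + A - A = N)]
  have e2 := fact_prod_ne (fun j => n j - a j)
  have e3 := fact_prod_ne a
  have e6 : ((N.factorial : ℕ) : ℂ) ≠ 0 := Nat.cast_ne_zero.mpr (Nat.factorial_ne_zero _)
  have e7 : (((A).factorial : ℕ) : ℂ) ≠ 0 := Nat.cast_ne_zero.mpr (Nat.factorial_ne_zero _)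
  simp only [← hN, ← hA]
  field_simp

/-- The multinomial Simons identity. -/
theorem multinomial_simons (m : ℕ) (hm : 0 < m) (n : Fin m → ℕ) (x : Fin m → ℂ) :
    ∑ k ∈ Finset.Iic n,
        (-1 : ℂ) ^ ((∑ j, n j) - ∑ j, k j) *
          multiBinom ((∑ j, n j : ℕ) : ℂ) (n - k) *
          multiBinom (((∑ j, n j) + ∑ j, k j : ℕ) : ℂ) k * ∏ j, (1 + x j) ^ k j =
      ∑ k ∈ Finset.Iic n,
        multiBinom ((∑ j, n j : ℕ) : ℂ) (n - k) *
          multiBinom (((∑ j, n j) + ∑ j, k j : ℕ) : ℂ) k * ∏ j, x j ^ k j := by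
  have hexp : ∀ k ∈ Finset.Iic n,
      (-1 : ℂ) ^ ((∑ j, n j) - ∑ j, k j) *
          multiBinom ((∑ j, n j : ℕ) : ℂ) (n - k) *
          multiBinom (((∑ j, n j) + ∑ j, k j : ℕ) : ℂ) k * ∏ j, (1 + x j) ^ k j
        = ∑ a ∈ Finset.Iic n,
            ((-1:ℂ) ^ ((∑ j, n j) - ∑ j, k j)
              * (multiBinom ((∑ j, n j : ℕ) : ℂ) (n - k)
                 * multiBinom (((∑ j, n j) + ∑ j, k j : ℕ) : ℂ) k)
              * ∏ j, ((k j).choose (a j) : ℂ)) * ∏ j, x j ^ a j := by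
    intro k hk
    have hkn : k ≤ n := Finset.mem_Iic.mp hk
    have h1 : ∏ j, (1 + x j) ^ k j
        = ∑ a ∈ Finset.Iic k, (∏ j, ((k j).choose (a j) : ℂ)) * ∏ j, x j ^ a j :=
      calc ∏ j, (1 + x j) ^ k j
          = ∏ j, ∑ i ∈ Finset.Iic (k j), ((k j).choose i : ℂ) * x j ^ i :=
            Finset.prod_congr rfl fun j _ => by
              rw [Iic_eq_range, add_comm, add_pow]
              exact Finset.sum_congr rfl fun i _ => by rw [one_pow]; ring
        _ = ∑ a ∈ Fintype.piFinset fun j => Finset.Iic (k j),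
              ∏ j, (((k j).choose (a j) : ℂ) * x j ^ a j) :=
            Finset.prod_univ_sum _ _
        _ = ∑ a ∈ Finset.Iic k, (∏ j, ((k j).choose (a j) : ℂ)) * ∏ j, x j ^ a j := by
            rw [← Iic_pi_eq]
            exact Finset.sum_congr rfl fun a _ => Finset.prod_mul_distrib
    rw [h1, Finset.mul_sum]
    rw [Finset.sum_subset (Finset.Iic_subset_Iic.mpr hkn) ?z]
    case z =>
      intro a _ ha
      obtain ⟨j, hj⟩ : ∃ j, k j < a j := by
        by_contra h
        push_neg at h
        exact ha (Finset.mem_Iic.mpr fun j => h j)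
      rw [Finset.prod_eq_zero (Finset.mem_univ j)
        (by rw [Nat.choose_eq_zero_of_lt hj]; simp)]
      ring
    exact Finset.sum_congr rfl fun a _ => by ring
  rw [Finset.sum_congr rfl hexp, Finset.sum_comm]
  refine Finset.sum_congr rfl fun a ha => ?_
  rw [← Finset.sum_mul, E_a n a ha, mul_assoc]
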